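/- A partition λ is an ℓ-core if and only if for every box (a,b) in the Young diagram of λ, the hook length h_{(a,b)} is not divisible by ℓ. -/

import Mathlib

/-- The hook length of the box `(a, b)` (0-indexed row `a`, column `b`)
of the Young diagram `μ`: the number of boxes to the right in its row,
plus the number of boxes below in its column, plus one. -/
def hookLen (μ : YoungDiagram) (a b : ℕ) : ℕ :=
  μ.rowLen a + μ.colLen b - a - b - 1

/-- A partition (Young diagram) is an `ℓ`-core when no box has hook length
divisible by `ℓ`. -/
def IsCore (ℓ : ℕ) (μ : YoungDiagram) : Prop :=
  ∀ a b : ℕ, (a, b) ∈ μ → ¬ ℓ ∣ hookLen μ a b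

/-- Two cells are adjacent if they share an edge. -/
def AdjCell (p q : ℕ × ℕ) : Prop :=
  (p.1 = q.1 ∧ (p.2 = q.2 + 1 ∨ q.2 = p.2 + 1)) ∨
  (p.2 = q.2 ∧ (p.1 = q.1 + 1 ∨ q.1 = p.1 + 1))

/-- A finite set of cells is connected if any two of its cells are joined by a
path of edge-adjacent cells inside the set. -/
def ConnectedCells (s : Finset (ℕ × ℕ)) : Prop :=
  ∀ p ∈ s, ∀ q ∈ s,
    Relation.ReflTransGen (fun x y => x ∈ s ∧ y ∈ s ∧ AdjCell x y) p q

/-- A set of cells contains no 2×2 square. -/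
def No2x2 (s : Finset (ℕ × ℕ)) : Prop :=
  ¬ ∃ a b : ℕ, (a, b) ∈ s ∧ (a + 1, b) ∈ s ∧ (a, b + 1) ∈ s ∧ (a + 1, b + 1) ∈ s

/-- `s` is a removable `ℓ`-rim hook of the Young diagram `lam`: a connected set of
`ℓ` cells of `lam`, containing no 2×2 square, whose removal from `lam` leaves the
Young diagram of a partition. -/
def IsRemovableRimHook (ℓ : ℕ) (lam : YoungDiagram) (s : Finset (ℕ × ℕ)) : Prop :=
  ∃ μ : YoungDiagram, μ.cells ⊆ lam.cells ∧ s = lam.cells \ μ.cells ∧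
    s.card = ℓ ∧ ConnectedCells s ∧ No2x2 s

/-- A set of cells all lying in a single row. -/
def HorizontalCells (s : Finset (ℕ × ℕ)) : Prop := ∀ p ∈ s, ∀ q ∈ s, p.1 = q.1

/-- A set of cells all lying in a single column. -/
def VerticalCells (s : Finset (ℕ × ℕ)) : Prop := ∀ p ∈ s, ∀ q ∈ s, p.2 = q.2

namespace RimHookAux

open YoungDiagram Finset Relation

/-! ### beta numbers -/

def beta (lam : YoungDiagram) (j : ℕ) : ℤ := (lam.rowLen j : ℤ) - 1 - j
def gco (lam : YoungDiagram) (b : ℕ) : ℤ := (b : ℤ) - lam.colLen b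

lemma hook_int {lam : YoungDiagram} {a b : ℕ} (h : (a, b) ∈ lam) :
    (hookLen lam a b : ℤ) = beta lam a - gco lam b := by
  have h1 : b < lam.rowLen a := mem_iff_lt_rowLen.mp h
  have h2 : a < lam.colLen b := mem_iff_lt_colLen.mp h
  unfold hookLen beta gco
  omega

lemma mem_of_gco_lt_beta {lam : YoungDiagram} {a b : ℕ}
    (h : gco lam b < beta lam a) : (a, b) ∈ lam := by
  by_contra hc
  have h1 : lam.rowLen a ≤ b := by
    by_contra h'; exact hc (mem_iff_lt_rowLen.mpr (by omega))
  have h2 : lam.colLen b ≤ a := by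
    by_contra h'; exact hc (mem_iff_lt_colLen.mpr (by omega))
  unfold beta gco at h
  omega

lemma gco_anti {lam : YoungDiagram} {b b' : ℕ} (h : b ≤ b') : gco lam b ≤ gco lam b' := by
  have := lam.colLen_anti b b' h
  unfold gco; omega

lemma coverage {lam : YoungDiagram} {y : ℤ} (hy : gco lam 0 ≤ y)
    (hnb : ∀ j, beta lam j ≠ y) : ∃ b, gco lam b = y := by
  by_contra hng
  push_neg at hng
  -- show by induction that gco lam b ≤ y for all b
  have key : ∀ b : ℕ, gco lam b ≤ y := by
    intro b
    induction b with
    | zero => exact hy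
    | succ b ih =>
      by_contra hlt
      push_neg at hlt
      have hlt' : gco lam b < y := lt_of_le_of_ne ih (hng b)
      -- y is strictly between gco b and gco (b+1); produce a beta
      have hcb : (b : ℤ) - lam.colLen b < y := hlt'
      have hcb1 : y < (b : ℤ) + 1 - lam.colLen (b + 1) := hlt
      have hyb : y ≤ (b : ℤ) := by
        have : (0 : ℤ) ≤ lam.colLen (b+1) := by positivity
        omega
      set j : ℕ := ((b : ℤ) - y).toNat with hj
      have hjval : (j : ℤ) = (b : ℤ) - y := by
        rw [hj]; omega
      have hjcol : j < lam.colLen b := by omega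
      have hjcol1 : lam.colLen (b+1) ≤ j := by omega
      have hmem : (j, b) ∈ lam := mem_iff_lt_colLen.mpr hjcol
      have hnmem : (j, b+1) ∉ lam := by
        rw [mem_iff_lt_colLen]; omega
      have hr1 : b < lam.rowLen j := mem_iff_lt_rowLen.mp hmem
      have hr2 : lam.rowLen j ≤ b + 1 := by
        by_contra h'; exact hnmem (mem_iff_lt_rowLen.mpr (by omega))
      have : beta lam j = y := by
        unfold beta; omega
      exact hnb j this
  -- contradiction: gco is unbounded
  set N : ℕ := (y + lam.colLen 0 + 1).toNat with hN
  have h1 := key N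
  have h2 := lam.colLen_anti 0 N (Nat.zero_le N)
  unfold gco at h1 hy
  omega

lemma hook_pos {lam : YoungDiagram} {a b : ℕ} (h : (a, b) ∈ lam) :
    1 ≤ hookLen lam a b := by
  have h1 : b < lam.rowLen a := mem_iff_lt_rowLen.mp h
  have h2 : a < lam.colLen b := mem_iff_lt_colLen.mp h
  unfold hookLen; omega

/-- If some box has hook length divisible by ℓ, some box has hook length exactly ℓ. -/
lemma exists_hook_exact {lam : YoungDiagram} {ℓ : ℕ} (hl : 1 ≤ ℓ) :
    ∀ n a b, hookLen lam a b = n → (a, b) ∈ lam → ℓ ∣ n →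
      ∃ a' b', (a', b') ∈ lam ∧ hookLen lam a' b' = ℓ := by
  intro n
  induction n using Nat.strong_induction_on with
  | _ n ih =>
    intro a b hn hab hdvd
    have hpos : 1 ≤ n := hn ▸ hook_pos hab
    have hln : ℓ ≤ n := Nat.le_of_dvd hpos hdvd
    rcases eq_or_lt_of_le hln with heq | hlt
    · exact ⟨a, b, hab, heq ▸ hn⟩
    · -- step down
      have hint : (n : ℤ) = beta lam a - gco lam b := hn ▸ hook_int hab
      set y : ℤ := gco lam b + ℓ with hy
      by_cases hb : ∃ j, beta lam j = y
      · obtain ⟨j, hj⟩ := hb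
        have hmem : (j, b) ∈ lam := mem_of_gco_lt_beta (by omega)
        refine ⟨j, b, hmem, ?_⟩
        have : (hookLen lam j b : ℤ) = (ℓ : ℤ) := by rw [hook_int hmem]; omega
        omega
      · push_neg at hb
        have hy0 : gco lam 0 ≤ y := by
          have := gco_anti (lam := lam) (Nat.zero_le b); omega
        obtain ⟨b', hb'⟩ := coverage hy0 hb
        have hmem : (a, b') ∈ lam := mem_of_gco_lt_beta (by omega)
        have hval : (hookLen lam a b' : ℤ) = (n : ℤ) - ℓ := by
          rw [hook_int hmem]; omega
        have hval' : hookLen lam a b' = n - ℓ := by omega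
        exact ih (n - ℓ) (by omega) a b' hval' hmem
          ((Nat.dvd_sub hdvd dvd_rfl))

end RimHookAux

namespace RimHookAux

open YoungDiagram Finset Relation

/-! ### Generic helper lemmas -/

lemma adj_symm {p q : ℕ × ℕ} (h : AdjCell p q) : AdjCell q p := by
  unfold AdjCell at *; tauto

lemma sum_tele (L m : ℕ → ℕ) (a : ℕ) : ∀ r, a < r →
    (∀ i, a ≤ i → i + 1 < r → m i + 1 = L (i + 1)) →
    (∀ i, a ≤ i → i < r → m i ≤ L i) →
    (Finset.Ico a r).sum (fun i => L i - m i) + m (r - 1) + a = L a + (r - 1) := by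
  intro r
  induction r with
  | zero => omega
  | succ r ih =>
    intro har hmid hle
    rcases eq_or_lt_of_le (Nat.lt_succ_iff.mp har) with heq | hlt
    · subst heq
      rw [Finset.sum_Ico_succ_top (le_refl a), Finset.Ico_self, Finset.sum_empty]
      have := hle a le_rfl (by omega)
      simp only [Nat.add_sub_cancel]
      omega
    · rw [Finset.sum_Ico_succ_top (le_of_lt hlt)]
      have hIH := ih hlt (fun i h1 h2 => hmid i h1 (by omega)) (fun i h1 h2 => hle i h1 (by omega))
      have h1 := hmid (r - 1) (by omega) (by omega)
      have h2 := hle r (by omega) (by omega)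
      have hr : r - 1 + 1 = r := by omega
      rw [hr] at h1
      simp only [Nat.add_sub_cancel]
      omega

/-- walk left along a row -/
lemma walk_row (s : Finset (ℕ × ℕ)) (i k : ℕ) :
    ∀ j, k ≤ j → (∀ t, k ≤ t → t ≤ j → (i, t) ∈ s) →
      Relation.ReflTransGen (fun x y => x ∈ s ∧ y ∈ s ∧ AdjCell x y) (i, j) (i, k) := by
  intro j
  induction j with
  | zero => intro hk _; cases Nat.le_zero.mp hk; exact ReflTransGen.refl
  | succ j ih =>
    intro hk hall
    rcases eq_or_lt_of_le hk with heq | hlt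
    · cases heq; exact ReflTransGen.refl
    · refine ReflTransGen.head ⟨hall _ (by omega) le_rfl, hall _ (by omega) (by omega), ?_⟩
        (ih (by omega) (fun t h1 h2 => hall t h1 (by omega)))
      left; exact ⟨rfl, Or.inl rfl⟩

end RimHookAux

namespace RimHookAux

open YoungDiagram Finset Relation

section Construction

/-- new row lengths after removing the rim hook of box (a,b); r = colLen b -/
def mfun (lam : YoungDiagram) (a b r i : ℕ) : ℕ :=
  if i < a then lam.rowLen i
  else if r ≤ i then lam.rowLen i
  else if i = r - 1 then b
  else lam.rowLen (i + 1) - 1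

variable {lam : YoungDiagram} {a b : ℕ}

lemma hbL (hab : (a, b) ∈ lam) : b < lam.rowLen (lam.colLen b - 1) := by
  have h2 : a < lam.colLen b := mem_iff_lt_colLen.mp hab
  exact mem_iff_lt_rowLen.mp (mem_iff_lt_colLen.mpr (by omega))

lemma hLb (hab : (a, b) ∈ lam) : lam.rowLen (lam.colLen b) ≤ b := by
  by_contra h
  have : (lam.colLen b, b) ∈ lam := mem_iff_lt_rowLen.mpr (by omega)
  have := mem_iff_lt_colLen.mp this
  omega

lemma m_le (hab : (a, b) ∈ lam) : ∀ i, mfun lam a b (lam.colLen b) i ≤ lam.rowLen i := by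
  intro i
  unfold mfun
  split
  · exact le_rfl
  · split
    · exact le_rfl
    · split
      · rename_i h1 h2 h3
        rw [h3]
        exact le_of_lt (hbL hab)
      · have := lam.rowLen_anti i (i + 1) (by omega)
        omega

lemma m_anti (hab : (a, b) ∈ lam) :
    ∀ i, mfun lam a b (lam.colLen b) (i + 1) ≤ mfun lam a b (lam.colLen b) i := by
  intro i
  set r := lam.colLen b with hr
  have hac : a < r := mem_iff_lt_colLen.mp hab
  have hL1 := lam.rowLen_anti i (i + 1) (by omega)
  have hL2 := lam.rowLen_anti (i + 1) (i + 1 + 1) (by omega)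
  have hbr := hbL hab
  have hrb := hLb hab
  rw [← hr] at hbr hrb
  unfold mfun
  by_cases h1 : i + 1 < a
  · simp only [if_pos (show i < a by omega), if_pos h1]; omega
  · by_cases h2 : i < a
    · -- i + 1 = a
      have ha : i + 1 = a := by omega
      simp only [if_pos h2, if_neg h1]
      split
      · omega
      · split
        · rename_i _ h3
          have : b < lam.rowLen (i + 1) := h3 ▸ hbr
          omega
        · have := lam.rowLen_anti i (i + 1 + 1) (by omega)
          omega
    · simp only [if_neg h1, if_neg h2]
      by_cases h3 : r ≤ i
      · simp only [if_pos h3, if_pos (show r ≤ i + 1 by omega)]; omega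
      · simp only [if_neg h3]
        by_cases h4 : r ≤ i + 1
        · -- i = r - 1
          have hi : i = r - 1 := by omega
          simp only [if_pos h4, if_pos hi]
          have : i + 1 = r := by omega
          rw [this]; omega
        · simp only [if_neg h4]
          by_cases h5 : i + 1 = r - 1
          · simp only [if_pos h5, if_neg (show ¬ i = r - 1 by omega)]
            rw [h5]; omega
          · simp only [if_neg h5, if_neg (show ¬ i = r - 1 by omega)]
            omega

lemma m_anti' (hab : (a, b) ∈ lam) {i j : ℕ} (hij : i ≤ j) :
    mfun lam a b (lam.colLen b) j ≤ mfun lam a b (lam.colLen b) i := by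
  induction j with
  | zero => cases Nat.le_zero.mp hij; exact le_rfl
  | succ j ih =>
    rcases eq_or_lt_of_le hij with heq | hlt
    · rw [heq]
    · exact le_trans (m_anti hab j) (ih (by omega))

lemma m_eq_of_out (hab : (a, b) ∈ lam) {i : ℕ} (h : i < a ∨ lam.colLen b ≤ i) :
    mfun lam a b (lam.colLen b) i = lam.rowLen i := by
  unfold mfun
  split
  · rfl
  · rcases h with h | h
    · omega
    · rw [if_pos h]

lemma m_eq_mid (hab : (a, b) ∈ lam) {i : ℕ} (h1 : a ≤ i) (h2 : i + 1 < lam.colLen b) :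
    mfun lam a b (lam.colLen b) i = lam.rowLen (i + 1) - 1 := by
  unfold mfun
  rw [if_neg (by omega), if_neg (by omega), if_neg (by omega)]

lemma m_eq_last (hab : (a, b) ∈ lam) :
    mfun lam a b (lam.colLen b) (lam.colLen b - 1) = b := by
  have hac : a < lam.colLen b := mem_iff_lt_colLen.mp hab
  unfold mfun
  rw [if_neg (by omega), if_neg (by omega), if_pos rfl]

/-- The remainder diagram. -/
def muDiag (lam : YoungDiagram) (a b : ℕ) (hab : (a, b) ∈ lam) : YoungDiagram where
  cells := lam.cells.filter (fun p => p.2 < mfun lam a b (lam.colLen b) p.1)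
  isLowerSet := by
    intro q p hpq hq
    simp only [Finset.coe_filter, Set.mem_setOf_eq, Finset.mem_coe] at hq ⊢
    obtain ⟨hq1, hq2⟩ := hq
    have hmem := lam.isLowerSet hpq hq1
    obtain ⟨h1, h2⟩ : p.1 ≤ q.1 ∧ p.2 ≤ q.2 := hpq
    refine ⟨hmem, ?_⟩
    · calc p.2 ≤ q.2 := h2
        _ < mfun lam a b (lam.colLen b) q.1 := hq2
        _ ≤ mfun lam a b (lam.colLen b) p.1 := m_anti' hab h1

lemma mem_sdiff_char (hab : (a, b) ∈ lam) (p : ℕ × ℕ) :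
    p ∈ lam.cells \ (muDiag lam a b hab).cells ↔
      mfun lam a b (lam.colLen b) p.1 ≤ p.2 ∧ p.2 < lam.rowLen p.1 := by
  simp only [muDiag, Finset.mem_sdiff, Finset.mem_filter, ← YoungDiagram.mem_cells,
    YoungDiagram.mem_cells]
  constructor
  · rintro ⟨h1, h2⟩
    have := (YoungDiagram.mem_iff_lt_rowLen (μ := lam) (i := p.1) (j := p.2)).mp h1
    refine ⟨by by_contra h; push_neg at h; exact h2 ⟨h1, h⟩, this⟩
  · rintro ⟨h1, h2⟩
    have hm : p ∈ lam := YoungDiagram.mem_iff_lt_rowLen.mpr h2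
    exact ⟨hm, fun hc => by omega⟩

lemma row_range_of_mem (hab : (a, b) ∈ lam) {p : ℕ × ℕ}
    (hp : p ∈ lam.cells \ (muDiag lam a b hab).cells) :
    a ≤ p.1 ∧ p.1 < lam.colLen b := by
  rw [mem_sdiff_char hab] at hp
  by_contra hc
  rw [m_eq_of_out hab (by omega)] at hp
  omega


lemma s_eq_biUnion (hab : (a, b) ∈ lam) :
    lam.cells \ (muDiag lam a b hab).cells =
      (Finset.Ico a (lam.colLen b)).biUnion
        (fun i => {i} ×ˢ Finset.Ico (mfun lam a b (lam.colLen b) i) (lam.rowLen i)) := by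
  ext p
  simp only [Finset.mem_biUnion, Finset.mem_Ico, Finset.mem_product, Finset.mem_singleton]
  constructor
  · intro hp
    obtain ⟨h1, h2⟩ := row_range_of_mem hab hp
    rw [mem_sdiff_char hab] at hp
    exact ⟨p.1, ⟨h1, h2⟩, rfl, hp.1, hp.2⟩
  · rintro ⟨i, ⟨hi1, hi2⟩, hpi, hp1, hp2⟩
    rw [mem_sdiff_char hab]
    rw [← hpi] at hp1 hp2
    exact ⟨hp1, hp2⟩

lemma s_card (hab : (a, b) ∈ lam) :
    (lam.cells \ (muDiag lam a b hab).cells).card = hookLen lam a b := by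
  rw [s_eq_biUnion hab]
  rw [Finset.card_biUnion]
  · have hac : a < lam.colLen b := mem_iff_lt_colLen.mp hab
    have hsum : ∀ i ∈ Finset.Ico a (lam.colLen b),
        ({i} ×ˢ Finset.Ico (mfun lam a b (lam.colLen b) i) (lam.rowLen i)).card
          = lam.rowLen i - mfun lam a b (lam.colLen b) i := by
      intro i _
      rw [Finset.card_product, Finset.card_singleton, Nat.card_Ico, one_mul]
    rw [Finset.sum_congr rfl hsum]
    have htele := sum_tele lam.rowLen (mfun lam a b (lam.colLen b)) a (lam.colLen b) hac
      (fun i h1 h2 => by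
        rw [m_eq_mid hab h1 h2]
        have : b < lam.rowLen (i + 1) := by
          have := lam.rowLen_anti (i + 1) (lam.colLen b - 1) (by omega)
          have := hbL hab
          omega
        omega)
      (fun i h1 h2 => m_le hab i)
    rw [m_eq_last hab] at htele
    have hb : b < lam.rowLen a := mem_iff_lt_rowLen.mp hab
    unfold hookLen
    omega
  · intro x hx y hy hxy
    rw [Function.onFun, Finset.disjoint_left]
    intro p hp hq
    simp only [Finset.mem_product, Finset.mem_singleton] at hp hq
    exact hxy (hp.1 ▸ hq.1 ▸ rfl)

lemma s_connected (hab : (a, b) ∈ lam) :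
    ConnectedCells (lam.cells \ (muDiag lam a b hab).cells) := by
  have hac : a < lam.colLen b := mem_iff_lt_colLen.mp hab
  set s := lam.cells \ (muDiag lam a b hab).cells with hs
  have hchar : ∀ p : ℕ × ℕ, p ∈ s ↔
      mfun lam a b (lam.colLen b) p.1 ≤ p.2 ∧ p.2 < lam.rowLen p.1 :=
    mem_sdiff_char hab
  have main : ∀ d i, i + d = lam.colLen b - 1 → a ≤ i →
      ∀ j, mfun lam a b (lam.colLen b) i ≤ j → j < lam.rowLen i →
      Relation.ReflTransGen (fun x y => x ∈ s ∧ y ∈ s ∧ AdjCell x y)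
        (i, j) (lam.colLen b - 1, b) := by
    intro d
    induction d with
    | zero =>
      intro i hi ha j hj1 hj2
      have hir : i = lam.colLen b - 1 := by omega
      have hmb : mfun lam a b (lam.colLen b) i = b := by
        rw [hir]; exact m_eq_last hab
      rw [← hir]
      refine walk_row s i b j (by omega) (fun t h1 h2 => ?_)
      rw [hchar]
      refine ⟨?_, ?_⟩
      · show mfun lam a b (lam.colLen b) i ≤ t
        omega
      · show t < lam.rowLen i
        omega
    | succ d ih =>
      intro i hi ha j hj1 hj2
      have hmi : mfun lam a b (lam.colLen b) i = lam.rowLen (i + 1) - 1 :=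
        m_eq_mid hab ha (by omega)
      have hb1 : b < lam.rowLen (i + 1) := by
        have := lam.rowLen_anti (i + 1) (lam.colLen b - 1) (by omega)
        have := hbL hab
        omega
      have hL1 := lam.rowLen_anti i (i + 1) (by omega)
      have step1 : Relation.ReflTransGen (fun x y => x ∈ s ∧ y ∈ s ∧ AdjCell x y)
          (i, j) (i, mfun lam a b (lam.colLen b) i) := by
        refine walk_row s i (mfun lam a b (lam.colLen b) i) j hj1 (fun t h1 h2 => ?_)
        rw [hchar]
        exact ⟨h1, by show t < lam.rowLen i; omega⟩
      have hmem1 : (i, mfun lam a b (lam.colLen b) i) ∈ s := by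
        rw [hchar]
        refine ⟨le_rfl, ?_⟩
        show mfun lam a b (lam.colLen b) i < lam.rowLen i
        omega
      have hmem2 : (i + 1, mfun lam a b (lam.colLen b) i) ∈ s := by
        rw [hchar]
        refine ⟨m_anti hab i, ?_⟩
        show mfun lam a b (lam.colLen b) i < lam.rowLen (i + 1)
        omega
      have step2 : Relation.ReflTransGen (fun x y => x ∈ s ∧ y ∈ s ∧ AdjCell x y)
          (i, mfun lam a b (lam.colLen b) i) (i + 1, mfun lam a b (lam.colLen b) i) :=
        Relation.ReflTransGen.single ⟨hmem1, hmem2, Or.inr ⟨rfl, Or.inr rfl⟩⟩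
      have step3 := ih (i + 1) (by omega) (by omega) (mfun lam a b (lam.colLen b) i)
        (m_anti hab i) (by omega)
      exact (step1.trans step2).trans step3
  intro p hp q hq
  have hsym : Symmetric (fun x y : ℕ × ℕ => x ∈ s ∧ y ∈ s ∧ AdjCell x y) := by
    intro x y ⟨h1, h2, h3⟩; exact ⟨h2, h1, adj_symm h3⟩
  have hp' := hp; have hq' := hq
  obtain ⟨hpa, hpr⟩ := row_range_of_mem hab hp
  obtain ⟨hqa, hqr⟩ := row_range_of_mem hab hq
  rw [hchar] at hp' hq'
  have path1 := main (lam.colLen b - 1 - p.1) p.1 (by omega) hpa p.2 hp'.1 hp'.2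
  have path2 := main (lam.colLen b - 1 - q.1) q.1 (by omega) hqa q.2 hq'.1 hq'.2
  have path1' : Relation.ReflTransGen _ (p.1, p.2) (lam.colLen b - 1, b) := path1
  have := path1'.trans ((@Relation.ReflTransGen.symmetric _ _ ⟨fun _ _ h => hsym h⟩).symm _ _ path2)
  simpa using this

lemma s_no2x2 (hab : (a, b) ∈ lam) :
    No2x2 (lam.cells \ (muDiag lam a b hab).cells) := by
  rintro ⟨i, j, h1, h2, h3, h4⟩
  have c1 := (mem_sdiff_char hab _).mp h1
  have c4 := (mem_sdiff_char hab _).mp h4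
  obtain ⟨hi1, hi2⟩ := row_range_of_mem hab h1
  obtain ⟨hj1, hj2⟩ := row_range_of_mem hab h4
  simp only at c1 c4 hi1 hi2 hj1 hj2
  have hmi : mfun lam a b (lam.colLen b) i = lam.rowLen (i + 1) - 1 :=
    m_eq_mid hab hi1 (by omega)
  omega

/-- Main construction: a box of hook length ℓ yields a removable rim hook. -/
lemma exists_rimhook {lam : YoungDiagram} {a b ℓ : ℕ} (hab : (a, b) ∈ lam)
    (hh : hookLen lam a b = ℓ) : ∃ s, IsRemovableRimHook ℓ lam s := by
  refine ⟨lam.cells \ (muDiag lam a b hab).cells, muDiag lam a b hab, ?_, rfl, ?_, ?_, ?_⟩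
  · intro p hp
    simp only [muDiag, Finset.mem_filter] at hp
    exact hp.1
  · rw [s_card hab, hh]
  · exact s_connected hab
  · exact s_no2x2 hab

end Construction


section Reverse

open YoungDiagram Finset Relation

/-- along a path, every intermediate row is crossed by a vertical step -/
lemma path_cross {s : Finset (ℕ × ℕ)} {p q : ℕ × ℕ}
    (h : Relation.ReflTransGen (fun x y => x ∈ s ∧ y ∈ s ∧ AdjCell x y) p q) :
    ∀ i, p.1 ≤ i → i < q.1 → ∃ j, (i, j) ∈ s ∧ (i + 1, j) ∈ s := by
  induction h with
  | refl => intro i h1 h2; omega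
  | tail hpy hstep ih =>
    rename_i y q'
    intro i h1 h2
    obtain ⟨hy, hq, hadj⟩ := hstep
    by_cases hcase : i < y.1
    · exact ih i h1 hcase
    · -- y.1 ≤ i < q'.1, and the step changes row by at most 1
      have hrow : q'.1 ≤ y.1 + 1 := by
        rcases hadj with ⟨h3, _⟩ | ⟨h3, h4 | h4⟩ <;> omega
      have : y.1 = i ∧ q'.1 = i + 1 := by omega
      obtain ⟨hy1, hq1⟩ := this
      have hcol : y.2 = q'.2 := by
        rcases hadj with ⟨h3, _⟩ | ⟨h3, _⟩
        · omega
        · exact h3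
      refine ⟨y.2, ?_, ?_⟩
      · have : (i, y.2) = y := by rw [← hy1]
        rw [this]; exact hy
      · have : (i + 1, y.2) = q' := by rw [← hq1, hcol]
        rw [this]; exact hq

lemma rimhook_gives_box {ℓ : ℕ} {lam : YoungDiagram} {s : Finset (ℕ × ℕ)}
    (hl : 1 ≤ ℓ) (hrim : IsRemovableRimHook ℓ lam s) :
    ∃ a b, (a, b) ∈ lam ∧ hookLen lam a b = ℓ := by
  obtain ⟨μ, hsub, hdiff, hcard, hconn, h2x2⟩ := hrim
  -- characterization of s
  have hchar : ∀ p : ℕ × ℕ, p ∈ s ↔ μ.rowLen p.1 ≤ p.2 ∧ p.2 < lam.rowLen p.1 := by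
    intro p
    rw [hdiff, Finset.mem_sdiff, YoungDiagram.mem_cells, YoungDiagram.mem_cells]
    constructor
    · rintro ⟨h1, h2⟩
      have hp1 := YoungDiagram.mem_iff_lt_rowLen.mp h1
      refine ⟨?_, hp1⟩
      by_contra h
      exact h2 (YoungDiagram.mem_iff_lt_rowLen.mpr (by omega))
    · rintro ⟨h1, h2⟩
      refine ⟨YoungDiagram.mem_iff_lt_rowLen.mpr h2, fun hc => ?_⟩
      have := YoungDiagram.mem_iff_lt_rowLen.mp hc
      omega
  have hmle : ∀ i, μ.rowLen i ≤ lam.rowLen i := by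
    intro i
    by_contra h
    push_neg at h
    have h1 : (i, lam.rowLen i) ∈ μ := YoungDiagram.mem_iff_lt_rowLen.mpr h
    have h2 := YoungDiagram.mem_iff_lt_rowLen.mp
      ((YoungDiagram.mem_cells _).mp (hsub ((YoungDiagram.mem_cells _).mpr h1)))
    omega
  -- s is nonempty
  have hne : s.Nonempty := by
    rw [← Finset.card_pos, hcard]; omega
  have hne' : (s.image Prod.fst).Nonempty := hne.image _
  set a := (s.image Prod.fst).min' hne' with hadef
  set e := (s.image Prod.fst).max' hne' with hedef
  obtain ⟨pa, hpa, hpa1⟩ := Finset.mem_image.mp ((s.image Prod.fst).min'_mem hne')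
  obtain ⟨pe, hpe, hpe1⟩ := Finset.mem_image.mp ((s.image Prod.fst).max'_mem hne')
  rw [← hadef] at hpa1
  rw [← hedef] at hpe1
  have hrowbound : ∀ p ∈ s, a ≤ p.1 ∧ p.1 ≤ e := by
    intro p hp
    exact ⟨Finset.min'_le _ _ (Finset.mem_image_of_mem _ hp),
      Finset.le_max' _ _ (Finset.mem_image_of_mem _ hp)⟩
  have hae : a ≤ e := by
    have h := hrowbound pa hpa
    omega
  -- crossing for each intermediate row
  have hcross : ∀ i, a ≤ i → i < e → ∃ j, (i, j) ∈ s ∧ (i + 1, j) ∈ s := by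
    intro i h1 h2
    have hpath := hconn pa hpa pe hpe
    exact path_cross hpath i (by omega) (by omega)
  -- consecutive rows: μ.rowLen i + 1 = lam.rowLen (i+1)
  have hmid : ∀ i, a ≤ i → i < e → μ.rowLen i + 1 = lam.rowLen (i + 1) := by
    intro i h1 h2
    obtain ⟨j, hj1, hj2⟩ := hcross i h1 h2
    have c1 := (hchar _).mp hj1
    have c2 := (hchar _).mp hj2
    simp only at c1 c2
    -- μ.rowLen i ≤ j < lam.rowLen (i+1), so μ.rowLen i + 1 ≤ lam.rowLen (i+1)
    have hle : μ.rowLen i + 1 ≤ lam.rowLen (i + 1) := by omega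
    by_contra hne2
    have hlt : μ.rowLen i + 1 < lam.rowLen (i + 1) := by omega
    -- then there is a 2x2 square
    apply h2x2
    refine ⟨i, μ.rowLen i, ?_, ?_, ?_, ?_⟩ <;> rw [hchar]
    · refine ⟨le_rfl, ?_⟩
      show μ.rowLen i < lam.rowLen i
      have := lam.rowLen_anti (i + 1) ((i + 1)) le_rfl
      have := lam.rowLen_anti i (i + 1) (by omega)
      omega
    · refine ⟨?_, ?_⟩
      · show μ.rowLen (i + 1) ≤ μ.rowLen i
        exact μ.rowLen_anti i (i + 1) (by omega)
      · show μ.rowLen i < lam.rowLen (i + 1)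
        omega
    · refine ⟨?_, ?_⟩
      · show μ.rowLen i ≤ μ.rowLen i + 1
        omega
      · show μ.rowLen i + 1 < lam.rowLen i
        have := lam.rowLen_anti i (i + 1) (by omega)
        omega
    · refine ⟨?_, ?_⟩
      · show μ.rowLen (i + 1) ≤ μ.rowLen i + 1
        have := μ.rowLen_anti i (i + 1) (by omega)
        omega
      · show μ.rowLen i + 1 < lam.rowLen (i + 1)
        omega
  -- rows outside [a, e] are untouched
  have hout : ∀ i, i < a ∨ e < i → μ.rowLen i = lam.rowLen i := by
    intro i hi
    by_contra h
    have hlt : μ.rowLen i < lam.rowLen i := lt_of_le_of_ne (hmle i) h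
    have : (i, μ.rowLen i) ∈ s := by
      rw [hchar]; exact ⟨le_rfl, hlt⟩
    have := hrowbound _ this
    simp only at this
    omega
  -- rows in [a, e] are touched
  have hin : ∀ i, a ≤ i → i ≤ e → μ.rowLen i < lam.rowLen i := by
    intro i h1 h2
    rcases eq_or_lt_of_le h2 with heq | hlt
    · have hc := (hchar pe).mp hpe
      have e1 : μ.rowLen i ≤ pe.2 := by
        rw [heq, ← hpe1]; exact hc.1
      have e2 : pe.2 < lam.rowLen i := by
        rw [heq, ← hpe1]; exact hc.2
      omega
    · obtain ⟨j, hj1, _⟩ := hcross i h1 hlt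
      have h3 := (hchar _).mp hj1
      simp only at h3
      omega
  -- the box
  refine ⟨a, μ.rowLen e, ?_, ?_⟩
  · -- (a, μ.rowLen e) ∈ lam
    rw [YoungDiagram.mem_iff_lt_rowLen]
    calc μ.rowLen e < lam.rowLen e := hin e hae le_rfl
      _ ≤ lam.rowLen a := lam.rowLen_anti a e hae
  · -- hook length computation
    have hcol : lam.colLen (μ.rowLen e) = e + 1 := by
      have h1 : (e, μ.rowLen e) ∈ lam :=
        YoungDiagram.mem_iff_lt_rowLen.mpr (hin e hae le_rfl)
      have h2 : (e + 1, μ.rowLen e) ∉ lam := by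
        rw [YoungDiagram.mem_iff_lt_rowLen]
        push_neg
        calc lam.rowLen (e + 1) = μ.rowLen (e + 1) := (hout (e+1) (by omega)).symm
          _ ≤ μ.rowLen e := μ.rowLen_anti e (e + 1) (by omega)
      have hc1 := YoungDiagram.mem_iff_lt_colLen.mp h1
      have hc2 : lam.colLen (μ.rowLen e) ≤ e + 1 := by
        by_contra h
        exact h2 (YoungDiagram.mem_iff_lt_colLen.mpr (by omega))
      omega
    -- card computation via biUnion
    have hsu : s = (Finset.Ico a (e + 1)).biUnion
        (fun i => {i} ×ˢ Finset.Ico (μ.rowLen i) (lam.rowLen i)) := by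
      ext p
      simp only [Finset.mem_biUnion, Finset.mem_Ico, Finset.mem_product, Finset.mem_singleton]
      constructor
      · intro hp
        obtain ⟨h1, h2⟩ := hrowbound p hp
        have h3 := (hchar p).mp hp
        exact ⟨p.1, ⟨h1, by omega⟩, rfl, h3.1, h3.2⟩
      · rintro ⟨i, ⟨hi1, hi2⟩, hpi, hp1, hp2⟩
        rw [← hpi] at hp1 hp2
        exact (hchar p).mpr ⟨hp1, hp2⟩
    have hcards : s.card = (Finset.Ico a (e + 1)).sum
        (fun i => lam.rowLen i - μ.rowLen i) := by
      rw [hsu, Finset.card_biUnion]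
      · refine Finset.sum_congr rfl (fun i _ => ?_)
        rw [Finset.card_product, Finset.card_singleton, Nat.card_Ico, one_mul]
      · intro x hx y hy hxy
        rw [Function.onFun, Finset.disjoint_left]
        intro p hp hq
        simp only [Finset.mem_product, Finset.mem_singleton] at hp hq
        exact hxy (hp.1 ▸ hq.1 ▸ rfl)
    have htele := sum_tele lam.rowLen μ.rowLen a (e + 1) (by omega)
      (fun i h1 h2 => hmid i h1 (by omega))
      (fun i h1 h2 => hmle i)
    simp only [Nat.add_sub_cancel] at htele
    have hba : μ.rowLen e < lam.rowLen a := by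
      calc μ.rowLen e < lam.rowLen e := hin e hae le_rfl
        _ ≤ lam.rowLen a := lam.rowLen_anti a e hae
    unfold hookLen
    rw [hcol]
    omega

end Reverse

end RimHookAux

/-- A partition `λ` is an `ℓ`-core (has no removable `ℓ`-rim hook) if and only if
for every box `(a,b)` of `λ` the hook length `h_{(a,b)}` is not divisible by `ℓ`. -/
theorem stmt_4 (ℓ : ℕ) (hℓ : 2 ≤ ℓ) (lam : YoungDiagram) :
    (¬ ∃ s : Finset (ℕ × ℕ), IsRemovableRimHook ℓ lam s) ↔
      ∀ a b : ℕ, (a, b) ∈ lam → ¬ ℓ ∣ hookLen lam a b := by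
  constructor
  · intro hno a b hab hdvd
    obtain ⟨a', b', hab', hh⟩ :=
      RimHookAux.exists_hook_exact (lam := lam) (ℓ := ℓ) (by omega)
        (hookLen lam a b) a b rfl hab hdvd
    exact hno (RimHookAux.exists_rimhook hab' hh)
  · rintro hcore ⟨s, hs⟩
    obtain ⟨a, b, hab, hh⟩ := RimHookAux.rimhook_gives_box (by omega) hs
    exact hcore a b hab (hh ▸ dvd_refl ℓ)
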